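/- Let ι be a finite type and N : Finset ι → ℝ with N(∅) = 1. Then there exists a unique function Γ : Finset ι → ℝ with Γ(∅) = 0 such that for every α ∈ Finset ι, N(α) = Σ_{π ∈ Finpartition α} Π_{ζ ∈ π.parts} Γ(ζ), the sum running over all partitions of α into pairwise disjoint nonempty blocks and the product over the blocks of the partition. -/
import Mathlib

open Finset

namespace CCFaux

variable {ι : Type*} [DecidableEq ι]

lemma parts_eq_singleton_of_mem {α : Finset ι} (π : Finpartition α) (h : α ∈ π.parts) :
    π.parts = {α} := by
  ext β
  simp only [Finset.mem_singleton]
  constructor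
  · intro hβ
    by_contra hne
    have hd : Disjoint β α := π.disjoint hβ h hne
    exact π.ne_bot hβ (hd.eq_bot_of_le (π.le hβ))
  · rintro rfl; exact h

lemma card_lt_of_mem_parts {α ζ : Finset ι} (π : Finpartition α) (hα : α ∉ π.parts)
    (hζ : ζ ∈ π.parts) : ζ.card < α.card := by
  have hsub : ζ ⊆ α := π.le hζ
  have hne : ζ ≠ α := fun h => hα (h ▸ hζ)
  exact Finset.card_lt_card (ssubset_of_ne_of_subset hne hsub)

/-- The connected correlation functions, defined by strong recursion on cardinality. -/
noncomputable def gamma (N : Finset ι → ℝ) : Finset ι → ℝ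
  | α =>
    if α = ∅ then 0
    else N α - ∑ π ∈ (Finset.univ.filter
          (fun π : Finpartition α => α ∉ π.parts)).attach,
        ∏ ζ ∈ π.1.parts.attach, gamma N ζ.1
termination_by α => α.card
decreasing_by
  have hπ := π.2
  simp only [Finset.mem_filter] at hπ
  exact card_lt_of_mem_parts π.1 hπ.2 ζ.2

lemma gamma_empty (N : Finset ι → ℝ) : gamma N ∅ = 0 := by
  rw [gamma]; simp

lemma gamma_spec (N : Finset ι → ℝ) {α : Finset ι} (hα : α ≠ ∅) :
    gamma N α = N α - ∑ π ∈ (Finset.univ.filter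
          (fun π : Finpartition α => α ∉ π.parts)),
        ∏ ζ ∈ π.parts, gamma N ζ := by
  rw [gamma]
  simp only [if_neg hα]
  rw [← Finset.sum_attach (Finset.univ.filter (fun π : Finpartition α => α ∉ π.parts))
      (fun π => ∏ ζ ∈ π.parts, gamma N ζ)]
  congr 1
  refine Finset.sum_congr rfl fun π _ => ?_
  exact Finset.prod_attach π.1.parts (fun ζ => gamma N ζ)

/-- Splitting off the indiscrete partition. -/
lemma sum_split {α : Finset ι} (hα : α ≠ ∅) (Γ : Finset ι → ℝ) :
    ∑ π : Finpartition α, ∏ ζ ∈ π.parts, Γ ζ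
      = Γ α + ∑ π ∈ (Finset.univ.filter (fun π : Finpartition α => α ∉ π.parts)),
          ∏ ζ ∈ π.parts, Γ ζ := by
  classical
  rw [← Finset.sum_filter_add_sum_filter_not Finset.univ
      (fun π : Finpartition α => α ∈ π.parts) (fun π => ∏ ζ ∈ π.parts, Γ ζ)]
  congr 1
  have hbot : α ≠ (⊥ : Finset ι) := hα
  have hset : Finset.univ.filter (fun π : Finpartition α => α ∈ π.parts)
      = {Finpartition.indiscrete hbot} := by
    ext π
    simp only [Finset.mem_filter, Finset.mem_univ, true_and, Finset.mem_singleton]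
    constructor
    · intro h
      exact Finpartition.ext (by rw [parts_eq_singleton_of_mem π h]; rfl)
    · rintro rfl
      simp [Finpartition.indiscrete]
  rw [hset, Finset.sum_singleton]
  simp [Finpartition.indiscrete]

end CCFaux

/-- Existence and uniqueness of the connected correlation functions `Γ`
associated to a system of multipoint means `N`, defined by the relation
`N(α) = Σ_{π partition of α} Π_{ζ ∈ π} Γ(ζ)`. -/
theorem connected_correlation_functions_exist_unique
    (ι : Type*) [Fintype ι] [DecidableEq ι]
    (N : Finset ι → ℝ) (hN : N ∅ = 1) :
    ∃! Γ : Finset ι → ℝ, Γ ∅ = 0 ∧ ∀ α : Finset ι,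
      N α = ∑ π : Finpartition α, ∏ ζ ∈ π.parts, Γ ζ := by
  classical
  refine ⟨CCFaux.gamma N, ⟨CCFaux.gamma_empty N, fun α => ?_⟩, ?_⟩
  · rcases eq_or_ne α ∅ with rfl | hα
    · -- only the empty partition; product over no parts is 1
      haveI : Unique (Finpartition (∅ : Finset ι)) :=
        inferInstanceAs (Unique (Finpartition (⊥ : Finset ι)))
      rw [hN, Finset.univ_unique, Finset.sum_singleton]
      have hp : (default : Finpartition (∅ : Finset ι)).parts = ∅ :=
        Finpartition.parts_eq_empty_iff.mpr rfl
      simp [hp]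
    · rw [CCFaux.sum_split hα, CCFaux.gamma_spec N hα]
      ring
  · intro Γ ⟨hΓ0, hΓ⟩
    funext α
    induction α using Finset.strongInduction with
    | _ α ih =>
      rcases eq_or_ne α ∅ with rfl | hα
      · rw [hΓ0, CCFaux.gamma_empty]
      · have h1 := hΓ α
        rw [CCFaux.sum_split hα] at h1
        have h2 : ∀ π ∈ Finset.univ.filter (fun π : Finpartition α => α ∉ π.parts),
            ∏ ζ ∈ π.parts, Γ ζ = ∏ ζ ∈ π.parts, CCFaux.gamma N ζ := by
          intro π hπ
          simp only [Finset.mem_filter] at hπ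
          refine Finset.prod_congr rfl fun ζ hζ => ?_
          have : ζ ⊂ α := ssubset_of_ne_of_subset (fun h => hπ.2 (h ▸ hζ)) (π.le hζ)
          exact ih ζ this
        rw [Finset.sum_congr rfl h2] at h1
        rw [CCFaux.gamma_spec N hα]
        linarith
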